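/- arXiv:1009.3951 — 4 statements merged into one kernel-verified Lean document; each statement's English description precedes it below -/
import Mathlib

section
/- Fix n ≥ 2 and α with 1 < α < ∞. For probability distributions p = (p₁, ..., pₙ) with p₁ ≥ p₂ ≥ ... ≥ pₙ, the Rényi entropy H_α(p) = (1/(1-α)) ln(Σᵢ pᵢ^α) satisfies lim_{p₁→1} H_α(p)/(1-p₁) = α/(α-1). -/
/-- For `1 < α < ∞` and probability distributions `p` on `n ≥ 2` points sorted
in decreasing order, the Rényi entropy `H_α(p) = (1/(1-α)) ln (∑ pᵢ^α)` satisfies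
`lim_{p₁ → 1} H_α(p) / (1 - p₁) = α / (α - 1)`. -/
theorem renyiEntropy_ratio_tendsto (n : ℕ) (hn : 2 ≤ n) (α : ℝ) (hα : 1 < α) :
    ∀ ε > (0 : ℝ), ∃ δ > (0 : ℝ), ∀ p : Fin n → ℝ,
      (∀ i, 0 ≤ p i) → (∑ i, p i = 1) → (∀ i j : Fin n, i ≤ j → p j ≤ p i) →
      1 - δ < p ⟨0, by omega⟩ → p ⟨0, by omega⟩ < 1 →
      |((1 / (1 - α)) * Real.log (∑ i, p i ^ α)) / (1 - p ⟨0, by omega⟩) - α / (α - 1)| < ε := by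
  intro ε hε
  have hα0 : (0:ℝ) < α := by linarith
  set A := α - 1 with hAdef
  have hA : 0 < A := by simp only [hAdef]; linarith
  have h2α : (0:ℝ) < (2:ℝ) ^ α := Real.rpow_pos_of_pos two_pos α
  have hc : (0:ℝ) < ε * A / (2:ℝ) ^ α := by positivity
  set δ := min (1/2) (min (ε * A / (2 * α)) ((ε * A / (2:ℝ) ^ α) ^ A⁻¹)) with hδdef
  have hδ0 : 0 < δ := by
    apply lt_min (by norm_num)
    exact lt_min (by positivity) (Real.rpow_pos_of_pos hc _)
  refine ⟨δ, hδ0, ?_⟩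
  intro p hp0 hpsum hmono hlow hup
  set i0 : Fin n := ⟨0, by omega⟩ with hi0
  set t := 1 - p i0 with htdef
  have ht0 : 0 < t := by simp only [htdef]; linarith
  have htδ : t < δ := by simp only [htdef]; linarith
  have ht_half : t < 1/2 := lt_of_lt_of_le htδ (min_le_left _ _)
  have h1t : 0 < 1 - t := by linarith
  have h1tα : 0 < (1-t)^α := Real.rpow_pos_of_pos h1t α
  have htne : t ≠ 0 := ne_of_gt ht0
  have h1α : 1 - α ≠ 0 := by linarith
  -- sum splitting
  set S := ∑ i, p i ^ α with hSdef
  have hsplit : p i0 ^ α + ∑ i ∈ Finset.univ.erase i0, p i ^ α = S := by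
    rw [hSdef]
    exact Finset.add_sum_erase _ (fun i => p i ^ α) (Finset.mem_univ i0)
  have hrest : ∑ i ∈ Finset.univ.erase i0, p i = t := by
    have h := Finset.add_sum_erase Finset.univ p (Finset.mem_univ i0)
    rw [hpsum] at h
    simp only [htdef]; linarith
  have hple : ∀ i ∈ Finset.univ.erase i0, p i ≤ t := by
    intro i hi
    calc p i ≤ ∑ j ∈ Finset.univ.erase i0, p j :=
          Finset.single_le_sum (fun j _ => hp0 j) hi
      _ = t := hrest
  have hR0 : 0 ≤ ∑ i ∈ Finset.univ.erase i0, p i ^ α :=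
    Finset.sum_nonneg fun i _ => Real.rpow_nonneg (hp0 i) α
  have hα1A : α = 1 + A := by rw [hAdef]; ring
  have hRle : ∑ i ∈ Finset.univ.erase i0, p i ^ α ≤ t ^ α := by
    have key : ∀ i ∈ Finset.univ.erase i0, p i ^ α ≤ p i * t ^ A := by
      intro i hi
      rcases (hp0 i).eq_or_lt with h | h
      · rw [← h, Real.zero_rpow (by positivity), zero_mul]
      · have e : p i ^ α = p i * p i ^ A := by
          rw [hα1A, Real.rpow_add h, Real.rpow_one]
        rw [e]
        exact mul_le_mul_of_nonneg_left
          (Real.rpow_le_rpow h.le (hple i hi) hA.le) h.le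
    calc ∑ i ∈ Finset.univ.erase i0, p i ^ α
        ≤ ∑ i ∈ Finset.univ.erase i0, p i * t ^ A := Finset.sum_le_sum key
      _ = t * t ^ A := by rw [← Finset.sum_mul, hrest]
      _ = t ^ α := by rw [hα1A, Real.rpow_add ht0, Real.rpow_one]
  have hp0t : p i0 = 1 - t := by rw [htdef]; ring
  have hSlow : (1-t)^α ≤ S := by rw [← hsplit, hp0t]; linarith
  have hSup : S ≤ (1-t)^α + t^α := by rw [← hsplit, hp0t]; linarith
  have hSpos : 0 < S := lt_of_lt_of_le h1tα hSlow
  set L := Real.log S with hLdef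
  have hLlow : α * Real.log (1-t) ≤ L := by
    rw [← Real.log_rpow h1t]
    exact Real.log_le_log h1tα hSlow
  set x := t^α/(1-t)^α with hxdef
  have hx0 : 0 ≤ x := by positivity
  have hLup : L ≤ α * Real.log (1-t) + x := by
    have h1 : L ≤ Real.log ((1-t)^α + t^α) := Real.log_le_log hSpos hSup
    have h2 : (1-t)^α + t^α = (1-t)^α * (1 + x) := by
      rw [hxdef]; field_simp
    have h3 : Real.log ((1-t)^α * (1+x)) = α * Real.log (1-t) + Real.log (1+x) := by
      rw [Real.log_mul (ne_of_gt h1tα) (by positivity), Real.log_rpow h1t]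
    have h4 : Real.log (1+x) ≤ x := by
      have := Real.log_le_sub_one_of_pos (show (0:ℝ) < 1+x by linarith)
      linarith
    rw [h2, h3] at h1
    linarith
  have hlog1 : t ≤ -Real.log (1-t) := by
    have := Real.log_le_sub_one_of_pos h1t; linarith
  have hlog2 : -Real.log (1-t) * (1-t) ≤ t := by
    have h := Real.log_le_sub_one_of_pos (show (0:ℝ) < (1-t)⁻¹ by positivity)
    rw [Real.log_inv] at h
    have h2 : ((1-t)⁻¹ - 1) * (1-t) = t := by field_simp; ring
    nlinarith
  clear_value A δ i0 t S L x
  clear hsplit hrest hple hR0 hRle hp0 hpsum hmono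
  have hA' : α - 1 ≠ 0 := sub_ne_zero.mpr (ne_of_gt hα)
  have hαt : α * t - t ≠ 0 := by nlinarith
  have hkey : 1/(1-α) * L / t = -L/(A*t) := by
    rw [hAdef]; field_simp; ring
  rw [hkey, abs_lt]
  have hAt : 0 < A * t := mul_pos hA ht0
  constructor
  · -- lower bound
    have htA : t ^ A < ε * A / (2:ℝ)^α := by
      have hδ3 : δ ≤ (ε*A/(2:ℝ)^α) ^ A⁻¹ := by
        rw [hδdef]; exact le_trans (min_le_right _ _) (min_le_right _ _)
      have h := Real.rpow_lt_rpow ht0.le (lt_of_lt_of_le htδ hδ3) hA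
      rwa [← Real.rpow_mul hc.le, inv_mul_cancel₀ (ne_of_gt hA), Real.rpow_one] at h
    have hhalf : ((2:ℝ)^α)⁻¹ ≤ (1-t)^α := by
      have h1 : ((2:ℝ)⁻¹) ^ α ≤ (1-t)^α :=
        Real.rpow_le_rpow (by norm_num) (by linarith) hα0.le
      rwa [Real.inv_rpow (by norm_num)] at h1
    have htα : t ^ α = t ^ A * t := by
      rw [hα1A, Real.rpow_add ht0, Real.rpow_one]; ring
    have hxlt : x < ε * A * t := by
      rw [hxdef, div_lt_iff₀ h1tα, htα]
      calc t ^ A * t < (ε*A/(2:ℝ)^α) * t := mul_lt_mul_of_pos_right htA ht0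
        _ = (ε*A*t) * ((2:ℝ)^α)⁻¹ := by rw [div_eq_mul_inv]; ring
        _ ≤ (ε*A*t) * (1-t)^α := mul_le_mul_of_nonneg_left hhalf (by positivity)
    have hL1 : α * t - x ≤ -L := by
      have := mul_le_mul_of_nonneg_left hlog1 hα0.le
      linarith
    rw [lt_sub_iff_add_lt, lt_div_iff₀ hAt]
    have hexp : (-ε + α/A) * (A*t) = -(ε*A*t) + α*t := by
      field_simp
    rw [hexp]
    linarith
  · -- upper bound
    rw [sub_lt_iff_lt_add, div_lt_iff₀ hAt]
    have hexp : (ε + α/A) * (A*t) = ε*A*t + α*t := by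
      field_simp
    rw [hexp]
    have hL2 : -L ≤ α * (-Real.log (1-t)) := by linarith
    have ht_small : t < ε*A/(2*α) := by
      refine lt_of_lt_of_le htδ ?_
      rw [hδdef]; exact le_trans (min_le_right _ _) (min_le_left _ _)
    have hY0 : 0 ≤ -Real.log (1-t) := le_trans ht0.le hlog1
    have hY2t : -Real.log (1-t) ≤ 2*t := by
      have h := mul_le_mul_of_nonneg_left ht_half.le hY0
      linarith [hlog2, h]
    have hYfine : -Real.log (1-t) ≤ t + 2*t^2 := by
      have h := mul_le_mul_of_nonneg_right hY2t ht0.le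
      linarith [hlog2, h]
    have hfin : 2*α*t*t < ε*A*t := by
      have h := mul_lt_mul_of_pos_right ht_small (mul_pos (by positivity : (0:ℝ) < 2*α) ht0)
      have e : ε*A/(2*α) * (2*α*t) = ε*A*t := by field_simp
      calc 2*α*t*t = t * (2*α*t) := by ring
        _ < ε*A/(2*α) * (2*α*t) := h
        _ = ε*A*t := e
    linarith [mul_le_mul_of_nonneg_left hYfine hα0.le, hfin, hL2]
end

section
/- For any reals α, β with 1 < α < β ≤ ∞, there exist p₀ ∈ (0,1) and n ∈ ℕ with n ≥ 1 such that the probability distribution p = (p₀, (1-p₀)/n, ..., (1-p₀)/n) on n+1 points satisfies H_α(p) > ln 2 and H_β(p) < ln 2, where H_γ(p) = (1/(1-γ)) ln(p₀^γ + (1-p₀)^γ/n^{γ-1}) for finite γ and H_∞(p) = -ln p₀. -/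
set_option maxHeartbeats 1000000 in
/-- Core construction of Lemma 1: for any orders `1 < α < β ≤ ∞` there is a
peaked distribution `p = (p₀, (1-p₀)/n, ..., (1-p₀)/n)` on `n+1` points with
`H_α(p) > ln 2` while `H_β(p) < ln 2` (the last conjunct, `H_∞(p) = -ln p₀ < ln 2`,
covers the case `β = ∞`). -/
theorem renyi_conflict_construction (α β : ℝ) (hα : 1 < α) (hαβ : α < β) :
    ∃ p₀ ∈ Set.Ioo (0 : ℝ) 1, ∃ n : ℕ, 1 ≤ n ∧
      (1 / (1 - α)) * Real.log (p₀ ^ α + (1 - p₀) ^ α / (n : ℝ) ^ (α - 1))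
        > Real.log 2 ∧
      (1 / (1 - β)) * Real.log (p₀ ^ β + (1 - p₀) ^ β / (n : ℝ) ^ (β - 1))
        < Real.log 2 ∧
      -Real.log p₀ < Real.log 2 := by
  have h2 : (0:ℝ) < Real.log 2 := Real.log_pos (by norm_num)
  have hα0 : (0:ℝ) < α := lt_trans one_pos hα
  have hβ1 : (1:ℝ) < β := hα.trans hαβ
  have hβ0 : (0:ℝ) < β := lt_trans one_pos hβ1
  set a := (1-α)/α with ha
  set b := (1-β)/β with hb
  set m := (a+b)/2 with hm
  have hba : b < a := by
    rw [ha, hb, div_lt_div_iff₀ hβ0 hα0]; nlinarith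
  have ha0 : a < 0 := div_neg_of_neg_of_pos (by linarith) hα0
  have hb1 : -1 < b := by rw [hb, lt_div_iff₀ hβ0]; nlinarith
  have hma : m < a := by rw [hm]; linarith
  have hbm : b < m := by rw [hm]; linarith
  have hm0 : m < 0 := lt_trans hma ha0
  have hm1 : -1 < m := lt_trans hb1 hbm
  set t := m * Real.log 2 with ht
  set p := Real.exp t with hp
  have hp0 : 0 < p := Real.exp_pos t
  have ht0 : t < 0 := mul_neg_of_neg_of_pos hm0 h2
  have hp1 : p < 1 := by
    rw [hp, show (1:ℝ) = Real.exp 0 by simp]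
    exact Real.exp_lt_exp.mpr ht0
  have hlogp : Real.log p = t := Real.log_exp t
  have hq0 : 0 < 1 - p := by linarith
  have hq1 : 1 - p < 1 := by linarith
  have hpα : p ^ α = Real.exp (t * α) := by
    rw [Real.rpow_def_of_pos hp0, hlogp]
  have hpβ : p ^ β = Real.exp (t * β) := by
    rw [Real.rpow_def_of_pos hp0, hlogp]
  set ε := Real.exp ((1-α) * Real.log 2) - Real.exp (t * α) with hε
  have hεpos : 0 < ε := by
    rw [hε, sub_pos]
    apply Real.exp_lt_exp.mpr
    have : m * α < 1 - α := (lt_div_iff₀ hα0).mp hma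
    rw [ht]; nlinarith
  obtain ⟨n, hn⟩ := exists_nat_gt ((1/ε) ^ (1/(α-1)) : ℝ)
  have hinvε : (0:ℝ) < (1/ε) ^ (1/(α-1)) :=
    Real.rpow_pos_of_pos (by positivity) _
  have hn0 : (0:ℝ) < n := lt_trans hinvε hn
  have hn1 : 1 ≤ n := by
    exact_mod_cast Nat.one_le_iff_ne_zero.mpr (by rintro rfl; simp at hn0)
  have hα1 : (0:ℝ) < α - 1 := by linarith
  have hnpow : 1/ε < (n:ℝ) ^ (α-1) := by
    have h1 : ((1/ε) ^ (1/(α-1))) ^ (α-1) < (n:ℝ) ^ (α-1) :=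
      Real.rpow_lt_rpow (le_of_lt hinvε) hn hα1
    have h2' : ((1/ε) ^ (1/(α-1))) ^ (α-1) = 1/ε := by
      rw [← Real.rpow_mul (by positivity), one_div (α-1),
        inv_mul_cancel₀ (ne_of_gt hα1), Real.rpow_one]
    rwa [h2'] at h1
  have hnα : 0 < (n:ℝ) ^ (α-1) := Real.rpow_pos_of_pos hn0 _
  have hnβ : 0 < (n:ℝ) ^ (β-1) := Real.rpow_pos_of_pos hn0 _
  refine ⟨p, ⟨hp0, hp1⟩, n, hn1, ?_, ?_, ?_⟩
  · -- alpha condition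
    have hqα : (1-p) ^ α ≤ 1 :=
      Real.rpow_le_one (le_of_lt hq0) (le_of_lt hq1) (le_of_lt hα0)
    have hterm : (1-p) ^ α / (n:ℝ) ^ (α-1) < ε := by
      have h1 : (1-p) ^ α / (n:ℝ) ^ (α-1) ≤ 1 / (n:ℝ) ^ (α-1) := by gcongr
      have h2' : 1 / (n:ℝ) ^ (α-1) < ε := by
        rw [div_lt_iff₀ hnα]
        have h3 := (div_lt_iff₀ hεpos).mp hnpow
        nlinarith
      linarith
    have hA : p ^ α + (1-p) ^ α / (n:ℝ) ^ (α-1) < Real.exp ((1-α) * Real.log 2) := by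
      rw [hpα]; rw [hε] at hterm; linarith
    have hApos : 0 < p ^ α + (1-p) ^ α / (n:ℝ) ^ (α-1) := by positivity
    have hlogA := Real.log_lt_log hApos hA
    rw [Real.log_exp] at hlogA
    have hneg : 1/(1-α) < 0 := by
      apply div_neg_of_pos_of_neg one_pos; linarith
    have hmul := mul_lt_mul_of_neg_left hlogA hneg
    have hne : (1-α) ≠ 0 := ne_of_lt (by linarith)
    have hkey : (1/(1-α)) * ((1-α) * Real.log 2) = Real.log 2 := by
      field_simp
    rw [hkey] at hmul
    exact hmul
  · -- beta condition
    have hqβ : 0 < (1-p) ^ β / (n:ℝ) ^ (β-1) := by positivity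
    have hA : Real.exp ((1-β) * Real.log 2) < p ^ β + (1-p) ^ β / (n:ℝ) ^ (β-1) := by
      have h1 : Real.exp ((1-β) * Real.log 2) < Real.exp (t * β) := by
        apply Real.exp_lt_exp.mpr
        have h4 : 1 - β < m * β := (div_lt_iff₀ hβ0).mp hbm
        have h5 := mul_lt_mul_of_pos_right h4 h2
        rw [ht]
        linarith [h5]
      rw [hpβ]; linarith
    have hApos : 0 < p ^ β + (1-p) ^ β / (n:ℝ) ^ (β-1) := by positivity
    have hlogA := Real.log_lt_log (Real.exp_pos _) hA
    rw [Real.log_exp] at hlogA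
    have hneg : 1/(1-β) < 0 := by
      apply div_neg_of_pos_of_neg one_pos; linarith
    have hmul := mul_lt_mul_of_neg_left hlogA hneg
    have hne : (1-β) ≠ 0 := ne_of_lt (by linarith)
    have hkey : (1/(1-β)) * ((1-β) * Real.log 2) = Real.log 2 := by
      field_simp
    rw [hkey] at hmul
    exact hmul
  · rw [hlogp]; nlinarith
end

section
/- For any reals α, β with 0 ≤ α < β < 1, there exist integers m ≥ 2 and n ≥ 2 such that (1/(1-α)) ln((1/2)^α + (1/2)^α n^{1-α}) > ln m > (1/(1-β)) ln((1/2)^β + (1/2)^β n^{1-β}). -/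
set_option maxHeartbeats 800000


/-- Inequality (7) in Lemma 1: for any `0 ≤ α < β < 1` there exist `m, n ≥ 2`
such that the order-`α` Rényi entropy of the peaked distribution
`(1/2, 1/(2n), ..., 1/(2n))` exceeds `ln m`, while its order-`β` entropy is
below `ln m`. -/
theorem renyi_conflict_small_orders (α β : ℝ) (hα : 0 ≤ α) (hαβ : α < β)
    (hβ : β < 1) :
    ∃ m n : ℕ, 2 ≤ m ∧ 2 ≤ n ∧
      (1 / (1 - α)) * Real.log ((1 / 2 : ℝ) ^ α + (1 / 2 : ℝ) ^ α * (n : ℝ) ^ (1 - α))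
        > Real.log m ∧
      Real.log m >
        (1 / (1 - β)) * Real.log ((1 / 2 : ℝ) ^ β + (1 / 2 : ℝ) ^ β * (n : ℝ) ^ (1 - β)) := by
  have h1α : (0:ℝ) < 1 - α := by linarith
  have h1β : (0:ℝ) < 1 - β := by linarith
  have hβ0 : 0 < β := lt_of_le_of_lt hα hαβ
  set a : ℝ := (2:ℝ) ^ (-(α/(1-α))) with ha
  set b : ℝ := (2:ℝ) ^ (-(β/(1-β))) with hb
  have hfrac : α/(1-α) < β/(1-β) := by
    rw [div_lt_div_iff₀ h1α h1β]; nlinarith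
  have hba : b < a := by
    apply Real.rpow_lt_rpow_of_exponent_lt one_lt_two
    linarith
  have hb0 : (0:ℝ) < b := Real.rpow_pos_of_pos two_pos _
  have ha0 : (0:ℝ) < a := Real.rpow_pos_of_pos two_pos _
  set r : ℝ := (a + b) / 2 with hrdef
  have hrb : b < r := by rw [hrdef]; linarith
  have hra : r < a := by rw [hrdef]; linarith
  have hr0 : 0 < r := lt_trans hb0 hrb
  -- key rpow identities
  have half_alpha : (1/2 : ℝ) ^ α = (2:ℝ) ^ (-α) := by
    rw [one_div, Real.inv_rpow (by norm_num : (0:ℝ) ≤ 2),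
      ← Real.rpow_neg (by norm_num : (0:ℝ) ≤ 2)]
  have half_beta : (1/2 : ℝ) ^ β = (2:ℝ) ^ (-β) := by
    rw [one_div, Real.inv_rpow (by norm_num : (0:ℝ) ≤ 2),
      ← Real.rpow_neg (by norm_num : (0:ℝ) ≤ 2)]
  have hapow : a ^ (1-α) = (1/2 : ℝ) ^ α := by
    rw [ha, ← Real.rpow_mul (by norm_num : (0:ℝ) ≤ 2), half_alpha]
    congr 1
    field_simp
  have hbpow : b ^ (1-β) = (1/2 : ℝ) ^ β := by
    rw [hb, ← Real.rpow_mul (by norm_num : (0:ℝ) ≤ 2), half_beta]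
    congr 1
    field_simp
  set δ : ℝ := r ^ (1-β) - b ^ (1-β) with hδdef
  have hδ : 0 < δ := by
    have := Real.rpow_lt_rpow hb0.le hrb h1β
    rw [hδdef]; linarith
  set C : ℝ := (1/2 : ℝ) ^ β / δ with hCdef
  have hhalfβ0 : (0:ℝ) < (1/2 : ℝ) ^ β := Real.rpow_pos_of_pos (by norm_num) _
  have hhalfα0 : (0:ℝ) < (1/2 : ℝ) ^ α := Real.rpow_pos_of_pos (by norm_num) _
  have hC0 : 0 ≤ C := le_of_lt (div_pos hhalfβ0 hδ)
  set K : ℝ := max (max (2/r) (1/(a - r))) (C ^ ((1-β)⁻¹)) with hKdef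
  set n : ℕ := ⌈K⌉₊ + 2 with hn
  set N : ℝ := (n : ℝ) with hN
  have hKN : K < N := by
    have h1 : K ≤ (⌈K⌉₊ : ℝ) := Nat.le_ceil K
    have h2 : N = (⌈K⌉₊ : ℝ) + 2 := by rw [hN, hn]; push_cast; ring
    linarith
  have hN0 : 0 < N := by
    have : (0:ℝ) ≤ (⌈K⌉₊ : ℝ) := Nat.cast_nonneg _
    have h2 : N = (⌈K⌉₊ : ℝ) + 2 := by rw [hN, hn]; push_cast; ring
    linarith
  have hrN2 : 2 < r * N := by
    have h1 : 2/r < N := lt_of_le_of_lt (le_trans (le_max_left _ _) (le_max_left _ _)) hKN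
    calc 2 = (2/r) * r := by field_simp
    _ < N * r := by exact mul_lt_mul_of_pos_right h1 hr0
    _ = r * N := mul_comm _ _
  have haN : r * N + 1 < a * N := by
    have h1 : 1/(a-r) < N := lt_of_le_of_lt (le_trans (le_max_right _ _) (le_max_left _ _)) hKN
    have har : 0 < a - r := by linarith
    have : 1 < (a - r) * N := by
      calc 1 = (1/(a-r)) * (a-r) := by field_simp
      _ < N * (a - r) := mul_lt_mul_of_pos_right h1 har
      _ = (a - r) * N := mul_comm _ _
    nlinarith
  have hNpow : C < N ^ (1-β) := by
    have h1 : C ^ ((1-β)⁻¹) < N := lt_of_le_of_lt (le_max_right _ _) hKN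
    have h2 : (C ^ ((1-β)⁻¹)) ^ (1-β) < N ^ (1-β) :=
      Real.rpow_lt_rpow (Real.rpow_nonneg hC0 _) h1 h1β
    rwa [← Real.rpow_mul hC0, inv_mul_cancel₀ (ne_of_gt h1β), Real.rpow_one] at h2
  set m : ℕ := ⌈r * N⌉₊ with hm
  have hmge : r * N ≤ (m : ℝ) := Nat.le_ceil _
  have hm2 : 2 ≤ m := by
    have : (1:ℕ) < m := Nat.lt_ceil.mpr (by push_cast; linarith)
    omega
  have hm0 : (0:ℝ) < (m:ℝ) := by
    have : (0:ℕ) < m := by omega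
    exact_mod_cast this
  have hmlt : (m : ℝ) < a * N := by
    have := Nat.ceil_lt_add_one (le_of_lt (by positivity : (0:ℝ) < r * N))
    calc (m:ℝ) < r * N + 1 := this
    _ < a * N := haN
  refine ⟨m, n, hm2, le_add_self, ?_, ?_⟩
  · -- order-α inequality
    have key : (m:ℝ) ^ (1-α) < (1/2:ℝ)^α + (1/2:ℝ)^α * N ^ (1-α) := by
      have h1 : (m:ℝ) ^ (1-α) ≤ (a * N) ^ (1-α) :=
        Real.rpow_le_rpow hm0.le hmlt.le h1α.le
      have h2 : (a * N) ^ (1-α) = (1/2:ℝ)^α * N ^ (1-α) := by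
        rw [Real.mul_rpow ha0.le hN0.le, hapow]
      linarith
    have hpos : (0:ℝ) < (m:ℝ) ^ (1-α) := Real.rpow_pos_of_pos hm0 _
    have hlog := Real.log_lt_log hpos key
    rw [Real.log_rpow hm0] at hlog
    rw [gt_iff_lt, one_div, inv_mul_eq_div, lt_div_iff₀ h1α]
    linarith [hlog]
  · -- order-β inequality
    have key : (1/2:ℝ)^β + (1/2:ℝ)^β * N ^ (1-β) < (m:ℝ) ^ (1-β) := by
      have h1 : (r * N) ^ (1-β) ≤ (m:ℝ) ^ (1-β) :=
        Real.rpow_le_rpow (by positivity) hmge h1β.le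
      have h2 : (r * N) ^ (1-β) = r ^ (1-β) * N ^ (1-β) :=
        Real.mul_rpow hr0.le hN0.le
      have h3 : (1/2:ℝ)^β < δ * N ^ (1-β) := by
        have := (div_lt_iff₀ hδ).mp (by rw [← hCdef]; exact hNpow)
        linarith [this]
      have h4 : (1/2:ℝ)^β * N ^ (1-β) = b ^ (1-β) * N ^ (1-β) := by rw [hbpow]
      nlinarith [Real.rpow_pos_of_pos hN0 (1-β)]
    have hSpos : (0:ℝ) < (1/2:ℝ)^β + (1/2:ℝ)^β * N ^ (1-β) := by
      have := Real.rpow_pos_of_pos hN0 (1-β)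
      positivity
    have hlog := Real.log_lt_log hSpos key
    rw [Real.log_rpow hm0] at hlog
    rw [gt_iff_lt, one_div, inv_mul_eq_div, div_lt_iff₀ h1β]
    linarith [hlog]
end

section
/- Let t_N, s_N ∈ (0, 1) with t_N → 0 and s_N → 0. Then limsup_N (t_N ln t_N)/(s_N ln s_N) = 0 if and only if limsup_N t_N/s_N = 0, and limsup_N (t_N ln t_N)/(s_N ln s_N) = ∞ if and only if limsup_N t_N/s_N = ∞. -/
open Filter Real

/-- Monotonicity of `x ↦ x * (-log x)` on `(0, e⁻¹]`. -/
private lemma mono_negmul {a b : ℝ} (ha : 0 < a) (hab : a ≤ b) (hb : b ≤ Real.exp (-1)) :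
    a * -Real.log a ≤ b * -Real.log b := by
  have hb0 : 0 < b := lt_of_lt_of_le ha hab
  have hlb : 1 ≤ -Real.log b := by
    have h := Real.log_le_log hb0 hb
    rw [Real.log_exp] at h; linarith
  have h1 : Real.log b - Real.log a ≤ b / a - 1 := by
    rw [← Real.log_div hb0.ne' ha.ne']
    exact Real.log_le_sub_one_of_pos (div_pos hb0 ha)
  have h2 : a * (b / a) = b := by field_simp
  nlinarith [mul_le_mul_of_nonneg_left h1 ha.le,
    mul_le_mul_of_nonneg_left hab (by linarith : (0:ℝ) ≤ -Real.log b - 1)]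

private lemma lemA {c t s : ℝ} (hc : 0 < c) (hc1 : c ≤ 1) (hs0 : 0 < s) (hs1 : s < 1)
    (ht1 : t ≤ Real.exp (-1)) (h : c * s ≤ t) :
    c ≤ (t * -Real.log t) / (s * -Real.log s) := by
  have hd : 0 < s * -Real.log s := mul_pos hs0 (neg_pos.2 (Real.log_neg hs0 hs1))
  rw [le_div_iff₀ hd]
  have h1 : (c * s) * -Real.log (c * s) ≤ t * -Real.log t :=
    mono_negmul (mul_pos hc hs0) h ht1
  have h2 : -Real.log s ≤ -Real.log (c * s) := by
    have hm : Real.log (c * s) = Real.log c + Real.log s := Real.log_mul hc.ne' hs0.ne'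
    have hlc : Real.log c ≤ 0 := Real.log_nonpos hc.le hc1
    linarith
  nlinarith [mul_le_mul_of_nonneg_left h2 (mul_pos hc hs0).le]

private lemma lemC {c t s : ℝ} (hc : 0 < c) (hc1 : c ≤ 1) (ht0 : 0 < t) (hs0 : 0 < s)
    (hs1 : s < 1) (hs2 : s ≤ Real.exp (-1)) (h : t ≤ c * s) :
    (t * -Real.log t) / (s * -Real.log s) ≤ c * (1 - Real.log c) := by
  have hls : 1 ≤ -Real.log s := by
    have h' := Real.log_le_log hs0 hs2
    rw [Real.log_exp] at h'; linarith
  have hd : 0 < s * -Real.log s := mul_pos hs0 (by linarith)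
  rw [div_le_iff₀ hd]
  have hcs : c * s ≤ s := by nlinarith
  have h1 : t * -Real.log t ≤ (c * s) * -Real.log (c * s) :=
    mono_negmul ht0 h (le_trans hcs hs2)
  have hm : Real.log (c * s) = Real.log c + Real.log s := Real.log_mul hc.ne' hs0.ne'
  have hlc : Real.log c ≤ 0 := Real.log_nonpos hc.le hc1
  nlinarith [mul_le_mul_of_nonneg_left hls
    (mul_nonneg (mul_nonneg hc.le hs0.le) (neg_nonneg.2 hlc))]

private lemma lemB {t s : ℝ} (ht0 : 0 < t) (ht1' : t < 1) (hs0 : 0 < s) (hs1 : s < 1)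
    (hs2 : s ≤ Real.exp (-1))
    (hR : 1 < (t * -Real.log t) / (s * -Real.log s)) :
    (t * -Real.log t) / (s * -Real.log s) ≤ t / s := by
  have hd : 0 < s * -Real.log s := mul_pos hs0 (neg_pos.2 (Real.log_neg hs0 hs1))
  have hts : s < t := by
    by_contra hle
    push_neg at hle
    have hmono := mono_negmul ht0 hle hs2
    have : (t * -Real.log t) / (s * -Real.log s) ≤ 1 := by
      rw [div_le_one hd]; exact hmono
    linarith
  have hlt : -Real.log t ≤ -Real.log s := by
    have := Real.log_le_log hs0 hts.le; linarith
  rw [div_le_div_iff₀ hd hs0]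
  nlinarith [mul_le_mul_of_nonneg_left hlt (mul_pos ht0 hs0).le]

private lemma lemD {M t s : ℝ} (hM : 1 ≤ M) (ht1' : t < 1) (hs0 : 0 < s) (hs1 : s < 1)
    (ht1 : t ≤ Real.exp (-1)) (hs2 : s ≤ Real.exp (-2)) (h : M * s ≤ t) :
    Real.sqrt M / 2 ≤ (t * -Real.log t) / (s * -Real.log s) := by
  have hM0 : 0 < M := by linarith
  have ht0 : 0 < t := lt_of_lt_of_le (mul_pos hM0 hs0) h
  have hlsp : 0 < -Real.log s := neg_pos.2 (Real.log_neg hs0 hs1)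
  have hd : 0 < s * -Real.log s := mul_pos hs0 hlsp
  set q := Real.sqrt s with hq
  have hq0 : 0 < q := Real.sqrt_pos.2 hs0
  have hq2 : q ^ 2 = s := Real.sq_sqrt hs0.le
  have hlogq : Real.log q = Real.log s / 2 := Real.log_sqrt hs0.le
  have hsqM : 0 ≤ Real.sqrt M := Real.sqrt_nonneg M
  rw [le_div_iff₀ hd]
  rcases le_or_gt q t with hqt | htq
  · -- case √s ≤ t : t(-log t) ≥ q · (-log s)/2, and √M·q ≤ 1
    have h1 : q * -Real.log q ≤ t * -Real.log t := mono_negmul hq0 hqt ht1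
    have h2 : Real.sqrt M * q ≤ 1 := by
      rw [← Real.sqrt_mul hM0.le]
      have : M * s ≤ 1 := le_trans h (by linarith)
      calc Real.sqrt (M * s) ≤ Real.sqrt 1 := Real.sqrt_le_sqrt this
        _ = 1 := Real.sqrt_one
    -- goal : √M/2 * (s * -log s) ≤ t * -log t
    nlinarith [mul_le_mul_of_nonneg_right h2 (mul_nonneg hq0.le hlsp.le)]
  · -- case t < √s : M ≤ 1/q, so -log(Ms) ≥ (-log s)/2
    have hMs : M * s ≤ t := h
    have hMq : M * q ≤ 1 := by
      have : M * (q * q) < q := by nlinarith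
      nlinarith
    have hlogM : Real.log M ≤ -Real.log s / 2 := by
      have hMq' : M ≤ 1 / q := (le_div_iff₀ hq0).2 hMq
      have := Real.log_le_log hM0 hMq'
      rw [one_div, Real.log_inv, hlogq] at this
      linarith
    have h1 : (M * s) * -Real.log (M * s) ≤ t * -Real.log t :=
      mono_negmul (mul_pos hM0 hs0) hMs ht1
    have hm : Real.log (M * s) = Real.log M + Real.log s := Real.log_mul hM0.ne' hs0.ne'
    have hMhalf : (M * s) * (-Real.log s / 2) ≤ (M * s) * -Real.log (M * s) := by
      apply mul_le_mul_of_nonneg_left _ (mul_pos hM0 hs0).le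
      rw [hm]; linarith
    have hsqle : Real.sqrt M ≤ M := by
      nlinarith [Real.sq_sqrt hM0.le, Real.sqrt_nonneg M,
        Real.sqrt_le_sqrt hM, Real.sqrt_one]
    nlinarith [mul_pos hs0 hlsp]

private lemma bound3 {c : ℝ} (hc : 0 < c) (hc1 : c ≤ 1) :
    c * (1 - Real.log c) ≤ 3 * Real.sqrt c := by
  set q := Real.sqrt c with hq
  have hq0 : 0 < q := Real.sqrt_pos.2 hc
  have hq2 : q ^ 2 = c := Real.sq_sqrt hc.le
  have hq1 : q ≤ 1 := by nlinarith
  have hlogc : Real.log c = 2 * Real.log q := by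
    have := Real.log_sqrt hc.le; rw [← hq] at this; linarith
  have hlq : -Real.log q ≤ 1 / q - 1 := by
    have h := Real.log_le_sub_one_of_pos (show (0:ℝ) < 1 / q by positivity)
    rw [one_div, Real.log_inv] at h
    rw [one_div]; linarith
  have h3 : q ^ 2 * (1 / q) = q := by field_simp
  have h4 : c * Real.log c = 2 * (q ^ 2 * Real.log q) := by rw [hlogc, ← hq2]; ring
  have h5 : q ^ 2 ≤ q := by nlinarith
  nlinarith [h4, h5, h3, mul_le_mul_of_nonneg_left hlq (by positivity : (0:ℝ) ≤ q ^ 2)]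

private lemma small_choice (ε : ℝ) (hε : 0 < ε) :
    ∃ c : ℝ, 0 < c ∧ c ≤ 1 ∧ c * (1 - Real.log c) < ε := by
  refine ⟨min 1 ((ε / 6) ^ 2), lt_min one_pos (by positivity), min_le_left _ _, ?_⟩
  have hc0 : 0 < min 1 ((ε / 6) ^ 2) := lt_min one_pos (by positivity)
  have hb := bound3 hc0 (min_le_left _ _)
  have hsq : Real.sqrt (min 1 ((ε / 6) ^ 2)) ≤ ε / 6 := by
    calc Real.sqrt (min 1 ((ε / 6) ^ 2)) ≤ Real.sqrt ((ε / 6) ^ 2) :=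
          Real.sqrt_le_sqrt (min_le_right _ _)
      _ = ε / 6 := Real.sqrt_sq (by positivity)
  linarith

private lemma limsup_coe_eq_zero_iff {f : ℕ → ℝ} (hf : ∀ N, 0 < f N) :
    Filter.limsup (fun N => ((f N : ℝ) : EReal)) atTop = 0 ↔
      ∀ ε : ℝ, 0 < ε → ∀ᶠ N in atTop, f N < ε := by
  constructor
  · intro h ε hε
    have hlt : Filter.limsup (fun N => ((f N : ℝ) : EReal)) atTop < (ε : EReal) := by
      rw [h]; exact_mod_cast hε
    filter_upwards [Filter.eventually_lt_of_limsup_lt hlt] with N hN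
    exact_mod_cast hN
  · intro h
    apply le_antisymm
    · refine (Filter.limsup_le_iff).2 fun y hy => ?_
      obtain ⟨z, hz0, hzy⟩ := EReal.lt_iff_exists_real_btwn.1 hy
      filter_upwards [h z (by exact_mod_cast hz0)] with N hN
      exact lt_trans (by exact_mod_cast hN) hzy
    · exact Filter.le_limsup_of_frequently_le
        (Filter.Frequently.of_forall fun N => by exact_mod_cast (hf N).le)

private lemma limsup_coe_eq_top_iff (f : ℕ → ℝ) :
    Filter.limsup (fun N => ((f N : ℝ) : EReal)) atTop = ⊤ ↔
      ∀ M : ℝ, ∃ᶠ N in atTop, M < f N := by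
  constructor
  · intro h M
    have hlt : (M : EReal) < Filter.limsup (fun N => ((f N : ℝ) : EReal)) atTop := by
      rw [h]; exact EReal.coe_lt_top M
    exact (Filter.frequently_lt_of_lt_limsup (h := hlt)).mono fun N hN => by exact_mod_cast hN
  · intro h
    rw [eq_top_iff]
    by_contra hlt
    push_neg at hlt
    obtain ⟨z, hz, _⟩ := EReal.lt_iff_exists_real_btwn.1 hlt
    exact absurd hz (not_lt.2 (Filter.le_limsup_of_frequently_le
      ((h z).mono fun N hN => le_of_lt (by exact_mod_cast hN))))

open Filter in
/-- Comparison of the Shannon scale `t ln t` with the linear scale `t` in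
Proposition 2: for `t_N, s_N ∈ (0,1)` tending to `0`, the limsup of
`(t_N ln t_N)/(s_N ln s_N)` is `0` (resp. `∞`) iff the limsup of `t_N/s_N`
is `0` (resp. `∞`). -/
theorem limsup_ratio_log_scale_equiv (t s : ℕ → ℝ)
    (ht : ∀ N, t N ∈ Set.Ioo (0 : ℝ) 1) (hs : ∀ N, s N ∈ Set.Ioo (0 : ℝ) 1)
    (ht0 : Tendsto t atTop (nhds 0)) (hs0 : Tendsto s atTop (nhds 0)) :
    (Filter.limsup
        (fun N => (((t N * Real.log (t N)) / (s N * Real.log (s N)) : ℝ) : EReal))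
        atTop = 0 ↔
      Filter.limsup (fun N => ((t N / s N : ℝ) : EReal)) atTop = 0) ∧
    (Filter.limsup
        (fun N => (((t N * Real.log (t N)) / (s N * Real.log (s N)) : ℝ) : EReal))
        atTop = ⊤ ↔
      Filter.limsup (fun N => ((t N / s N : ℝ) : EReal)) atTop = ⊤) := by
  have key : ∀ N, (t N * Real.log (t N)) / (s N * Real.log (s N)) =
      (t N * -Real.log (t N)) / (s N * -Real.log (s N)) := fun N => by
    rw [mul_neg, mul_neg, neg_div_neg_eq]
  have hRpos : ∀ N, 0 < (t N * Real.log (t N)) / (s N * Real.log (s N)) := fun N => by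
    rw [key]
    exact div_pos (mul_pos (ht N).1 (neg_pos.2 (Real.log_neg (ht N).1 (ht N).2)))
      (mul_pos (hs N).1 (neg_pos.2 (Real.log_neg (hs N).1 (hs N).2)))
  have hrpos : ∀ N, 0 < t N / s N := fun N => div_pos (ht N).1 (hs N).1
  have hsmall : ∀ᶠ N in atTop, t N ≤ Real.exp (-1) ∧ s N ≤ Real.exp (-2) ∧
      s N ≤ Real.exp (-1) := by
    have h1 := ht0.eventually_lt_const (show (0:ℝ) < Real.exp (-1) from Real.exp_pos _)
    have h2 := hs0.eventually_lt_const (show (0:ℝ) < Real.exp (-2) from Real.exp_pos _)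
    have h3 := hs0.eventually_lt_const (show (0:ℝ) < Real.exp (-1) from Real.exp_pos _)
    filter_upwards [h1, h2, h3] with N a b c
    exact ⟨a.le, b.le, c.le⟩
  rw [limsup_coe_eq_zero_iff hRpos, limsup_coe_eq_zero_iff hrpos,
    limsup_coe_eq_top_iff, limsup_coe_eq_top_iff]
  refine ⟨⟨fun h ε hε => ?_, fun h ε hε => ?_⟩, ⟨fun h M => ?_, fun h M => ?_⟩⟩
  · -- limsup R = 0 → limsup r = 0
    have hc0 : 0 < min ε 1 := lt_min hε one_pos
    filter_upwards [h _ hc0, hsmall] with N hRN hSN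
    by_contra hcon
    push_neg at hcon
    have hεr : min ε 1 ≤ t N / s N := le_trans (min_le_left _ _) hcon
    have hcs : min ε 1 * s N ≤ t N := by
      rw [← le_div_iff₀ (hs N).1]; exact hεr
    have := lemA hc0 (min_le_right _ _) (hs N).1 (hs N).2 hSN.1 hcs
    rw [← key] at this
    linarith
  · -- limsup r = 0 → limsup R = 0
    obtain ⟨c, hc0, hc1, hcε⟩ := small_choice ε hε
    filter_upwards [h c hc0, hsmall] with N hrN hSN
    have hts : t N ≤ c * s N := by
      have := (div_lt_iff₀ (hs N).1).1 hrN
      linarith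
    have := lemC hc0 hc1 (ht N).1 (hs N).1 (hs N).2 hSN.2.2 hts
    rw [← key] at this
    linarith
  · -- limsup R = ⊤ → limsup r = ⊤
    refine ((h (max M 1)).and_eventually hsmall).mono fun N ⟨hRN, hSN⟩ => ?_
    have hR1 : 1 < (t N * -Real.log (t N)) / (s N * -Real.log (s N)) := by
      rw [← key]; exact lt_of_le_of_lt (le_max_right _ _) hRN
    have hB := lemB (ht N).1 (ht N).2 (hs N).1 (hs N).2 hSN.2.2 hR1
    rw [← key] at hB
    exact lt_of_le_of_lt (le_max_left _ _) (lt_of_lt_of_le hRN hB)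
  · -- limsup r = ⊤ → limsup R = ⊤
    set K : ℝ := (2 * |M| + 2) ^ 2 with hK
    have hK1 : 1 ≤ K := by nlinarith [abs_nonneg M]
    have hsqK : Real.sqrt K = 2 * |M| + 2 := Real.sqrt_sq (by positivity)
    refine ((h K).and_eventually hsmall).mono fun N ⟨hrN, hSN⟩ => ?_
    have hKs : K * s N ≤ t N := by
      have := (lt_div_iff₀ (hs N).1).1 hrN
      linarith
    have hD := lemD hK1 (ht N).2 (hs N).1 (hs N).2 hSN.1 hSN.2.1 hKs
    rw [← key, hsqK] at hD
    have : M < (2 * |M| + 2) / 2 := by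
      cases abs_cases M with
      | inl h' => rw [h'.1]; linarith
      | inr h' => rw [h'.1]; linarith
    linarith
end
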